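/- arXiv:2510.21951 — 2 statements merged into one kernel-verified Lean document; each statement's English description precedes it below -/
import Mathlib

section
/- With V_t defined by the dynamic programming recursion over a finite horizon, V_t(F) ≥ V_{t+1}(F) for all F ∈ [0,1] and all t = 0,…,T-2. That is, the profit-to-go function is pointwise nonincreasing in t. -/
noncomputable section

def R (p q F π : ℝ) : ℝ := Real.exp (p + q * F - π) / (1 + Real.exp (p + q * F - π))

def H (C p q F π : ℝ) : ℝ := (π - C) * (1 - F) * R p q F π

def Fplus (p q F π : ℝ) : ℝ := F + (1 - F) * R p q F π

lemma R_nonneg (p q F π : ℝ) : 0 ≤ R p q F π := by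
  unfold R; positivity

lemma R_le_one (p q F π : ℝ) : R p q F π ≤ 1 := by
  unfold R
  rw [div_le_one (by positivity)]
  linarith [Real.exp_pos (p + q * F - π)]

lemma Fplus_mem (p q : ℝ) {F : ℝ} (hF : F ∈ Set.Icc (0:ℝ) 1) (π : ℝ) :
    Fplus p q F π ∈ Set.Icc (0:ℝ) 1 := by
  obtain ⟨h0, h1⟩ := hF
  have hr := R_nonneg p q F π
  have hr1 := R_le_one p q F π
  constructor
  · unfold Fplus; nlinarith
  · unfold Fplus; nlinarith

lemma H_at_C (C p q F : ℝ) : H C p q F C = 0 := by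
  unfold H; ring

lemma H_le (C p q : ℝ) (hC : 0 ≤ C) (hq : 0 ≤ q) {F : ℝ} (hF : F ∈ Set.Icc (0:ℝ) 1)
    {π : ℝ} (hπ : 0 ≤ π) : H C p q F π ≤ Real.exp (p + q) := by
  obtain ⟨h0, h1⟩ := hF
  rcases le_or_gt π C with h | h
  · have key : (π - C) * ((1 - F) * R p q F π) ≤ 0 :=
      mul_nonpos_of_nonpos_of_nonneg (by linarith) (mul_nonneg (by linarith) (R_nonneg p q F π))
    have : H C p q F π ≤ 0 := by unfold H; linarith [key]
    exact this.trans (Real.exp_pos _).le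
  · have hR : R p q F π ≤ Real.exp (p + q * F - π) := by
      unfold R
      exact div_le_self (Real.exp_pos _).le (by linarith [Real.exp_pos (p + q * F - π)])
    have h1' : H C p q F π ≤ π * Real.exp (p + q * F - π) := by
      unfold H
      have hr := R_nonneg p q F π
      have e1 : (π - C) * ((1 - F) * R p q F π) ≤ π * ((1 - F) * R p q F π) :=
        mul_le_mul_of_nonneg_right (by linarith) (mul_nonneg (by linarith) hr)
      have e2 : (1 - F) * R p q F π ≤ R p q F π := mul_le_of_le_one_left hr (by linarith)
      have e3 : π * ((1 - F) * R p q F π) ≤ π * R p q F π := mul_le_mul_of_nonneg_left e2 hπ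
      have e4 : π * R p q F π ≤ π * Real.exp (p + q * F - π) := mul_le_mul_of_nonneg_left hR hπ
      linarith [e1, e3, e4]
    have h2 : π * Real.exp (p + q * F - π) ≤ Real.exp (p + q) := by
      have hsplit : Real.exp (p + q * F - π) = Real.exp (p + q * F) * Real.exp (-π) := by
        rw [← Real.exp_add]; ring_nf
      have hπe : π * Real.exp (-π) ≤ 1 := by
        have ha : π + 1 ≤ Real.exp π := Real.add_one_le_exp π
        rw [Real.exp_neg π, mul_inv_le_iff₀ (Real.exp_pos π)]
        linarith
      have hmon : Real.exp (p + q * F) ≤ Real.exp (p + q) := by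
        apply Real.exp_le_exp.mpr; nlinarith
      calc π * Real.exp (p + q * F - π)
          = Real.exp (p + q * F) * (π * Real.exp (-π)) := by rw [hsplit]; ring
        _ ≤ Real.exp (p + q * F) * 1 :=
            mul_le_mul_of_nonneg_left hπe (Real.exp_pos _).le
        _ ≤ Real.exp (p + q) := by rw [mul_one]; exact hmon
    linarith

lemma sup_mono_aux (f g : ℝ → ℝ) (h : ∀ x ∈ Set.Ici (0:ℝ), f x ≤ g x)
    (hb : BddAbove (g '' Set.Ici (0:ℝ))) :
    sSup (f '' Set.Ici (0:ℝ)) ≤ sSup (g '' Set.Ici (0:ℝ)) := by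
  apply csSup_le (Set.Nonempty.image _ Set.nonempty_Ici)
  rintro y ⟨x, hx, rfl⟩
  exact (h x hx).trans (le_csSup hb ⟨x, hx, rfl⟩)

/-- The profit-to-go functions of the dynamic program are pointwise nonincreasing in
time: `V t F ≥ V (t+1) F` for `t = 0,…,T-2` and `F ∈ [0,1]`. -/
theorem stmt_12 (C p q : ℝ) (hC : 0 ≤ C) (hq : 0 ≤ q)
    (T : ℕ) (hT : 2 ≤ T) (V : ℕ → ℝ → ℝ)
    (hlast : ∀ F : ℝ, V (T - 1) F = sSup ((fun π => H C p q F π) '' Set.Ici (0:ℝ)))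
    (hrec : ∀ t : ℕ, t < T - 1 → ∀ F : ℝ,
      V t F = sSup ((fun π => H C p q F π + V (t + 1) (Fplus p q F π)) '' Set.Ici (0:ℝ))) :
    ∀ t : ℕ, t < T - 1 → ∀ F ∈ Set.Icc (0:ℝ) 1, V (t + 1) F ≤ V t F := by
  set A := Real.exp (p + q) with hA
  have hA0 : 0 < A := Real.exp_pos _
  -- Bounds: 0 ≤ V t F ≤ (n+1) A when t + n = T - 1.
  have bound : ∀ n t, t + n = T - 1 → ∀ F ∈ Set.Icc (0:ℝ) 1,
      0 ≤ V t F ∧ V t F ≤ ((n : ℝ) + 1) * A := by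
    intro n
    induction n with
    | zero =>
      intro t ht F hF
      have ht' : t = T - 1 := by omega
      subst ht'
      rw [hlast F]
      have hb : BddAbove ((fun π => H C p q F π) '' Set.Ici (0:ℝ)) := by
        refine ⟨A, ?_⟩
        rintro y ⟨x, hx, rfl⟩
        exact H_le C p q hC hq hF hx
      constructor
      · have : H C p q F C ≤ sSup ((fun π => H C p q F π) '' Set.Ici (0:ℝ)) :=
          le_csSup hb ⟨C, hC, rfl⟩
        rw [H_at_C] at this
        exact this
      · apply csSup_le (Set.Nonempty.image _ Set.nonempty_Ici)
        rintro y ⟨x, hx, rfl⟩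
        have := H_le C p q hC hq hF hx
        push_cast
        linarith
    | succ n ih =>
      intro t ht F hF
      have htlt : t < T - 1 := by omega
      have hnext : t + 1 + n = T - 1 := by omega
      rw [hrec t htlt F]
      have hb : BddAbove ((fun π => H C p q F π + V (t + 1) (Fplus p q F π)) '' Set.Ici (0:ℝ)) := by
        refine ⟨A + ((n : ℝ) + 1) * A, ?_⟩
        rintro y ⟨x, hx, rfl⟩
        have h1 := H_le C p q hC hq hF hx
        have h2 := (ih (t + 1) hnext _ (Fplus_mem p q hF x)).2
        exact add_le_add h1 h2
      constructor
      · have hmem : H C p q F C + V (t + 1) (Fplus p q F C)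
            ≤ sSup ((fun π => H C p q F π + V (t + 1) (Fplus p q F π)) '' Set.Ici (0:ℝ)) :=
          le_csSup hb ⟨C, hC, rfl⟩
        have h0 := (ih (t + 1) hnext _ (Fplus_mem p q hF C)).1
        rw [H_at_C] at hmem
        linarith
      · apply csSup_le (Set.Nonempty.image _ Set.nonempty_Ici)
        rintro y ⟨x, hx, rfl⟩
        have h1 := H_le C p q hC hq hF hx
        have h2 := (ih (t + 1) hnext _ (Fplus_mem p q hF x)).2
        push_cast
        nlinarith
  -- Monotonicity by induction on n with t + n = T - 1, n > 0.
  have mono : ∀ n t, t + n = T - 1 → 0 < n → ∀ F ∈ Set.Icc (0:ℝ) 1, V (t + 1) F ≤ V t F := by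
    intro n
    induction n with
    | zero => intro t _ h0; omega
    | succ n ih =>
      intro t ht _ F hF
      have htlt : t < T - 1 := by omega
      have hnext : t + 1 + n = T - 1 := by omega
      have hb : BddAbove ((fun π => H C p q F π + V (t + 1) (Fplus p q F π)) '' Set.Ici (0:ℝ)) := by
        refine ⟨A + ((n : ℝ) + 1) * A, ?_⟩
        rintro y ⟨x, hx, rfl⟩
        exact add_le_add (H_le C p q hC hq hF hx)
          ((bound n (t + 1) hnext _ (Fplus_mem p q hF x)).2)
      rcases Nat.eq_zero_or_pos n with hn0 | hn0
      · -- t + 1 = T - 1 : compare sSup H with sSup (H + V(t+1)∘Fplus)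
        have ht1 : t + 1 = T - 1 := by omega
        have hV1 : V (t + 1) F = sSup ((fun π => H C p q F π) '' Set.Ici (0:ℝ)) := by
          rw [ht1]; exact hlast F
        rw [hV1, hrec t htlt F]
        apply sup_mono_aux _ _ _ hb
        intro x hx
        have h0 := (bound n (t + 1) hnext _ (Fplus_mem p q hF x)).1
        linarith
      · -- t + 1 < T - 1 : use hrec at t+1 and IH
        have ht1lt : t + 1 < T - 1 := by omega
        rw [hrec t htlt F, hrec (t + 1) ht1lt F]
        apply sup_mono_aux _ _ _ hb
        intro x hx
        have := ih (t + 1) hnext hn0 _ (Fplus_mem p q hF x)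
        linarith
  intro t ht F hF
  exact mono (T - 1 - t) t (by omega) (by omega) F hF
end
end

section
/- For the two-period problem (T = 2) with 0 ≤ q ≤ 1, the optimal first-period price π*_0(F) satisfies π*_0(F) ≥ π*_1(F) for all F ∈ [0,1), where π*_1(F) = C + 1 + W(e^{p+qF-(C+1)}). -/
noncomputable section

lemma texp_aux (t : ℝ) (ht : 0 ≤ t) : Real.exp t - 1 ≤ t * Real.exp t := by
  have h1 := Real.add_one_le_exp (-t)
  have h2 : Real.exp (-t) * Real.exp t = 1 := by
    rw [← Real.exp_add]; simp
  nlinarith [Real.exp_pos t]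

lemma Vmono (C p q : ℝ) (hq0 : 0 ≤ q) (hq1 : q ≤ 1)
    (W : ℝ → ℝ) (hW : ∀ z : ℝ, 0 ≤ z → 0 ≤ W z ∧ W z * Real.exp (W z) = z)
    (F₁ F₂ : ℝ) (h0 : 0 ≤ F₁) (h12 : F₁ ≤ F₂) (h21 : F₂ ≤ 1) :
    (1 - F₂) * W (Real.exp (p + q * F₂ - (C + 1))) ≤
      (1 - F₁) * W (Real.exp (p + q * F₁ - (C + 1))) := by
  obtain ⟨hw10, hw1⟩ := hW (Real.exp (p + q * F₁ - (C + 1))) (Real.exp_pos _).le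
  obtain ⟨hw20, hw2⟩ := hW (Real.exp (p + q * F₂ - (C + 1))) (Real.exp_pos _).le
  set w₁ := W (Real.exp (p + q * F₁ - (C + 1))) with hw₁def
  set w₂ := W (Real.exp (p + q * F₂ - (C + 1))) with hw₂def
  have hw1pos : 0 < w₁ := by
    rcases hw10.lt_or_eq with h | h
    · exact h
    · exfalso
      have := Real.exp_pos (p + q * F₁ - (C + 1))
      nlinarith [Real.exp_pos w₁]
  have hw2pos : 0 < w₂ := by
    rcases hw20.lt_or_eq with h | h
    · exact h
    · exfalso
      have := Real.exp_pos (p + q * F₂ - (C + 1))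
      nlinarith [Real.exp_pos w₂]
  have hl1 : Real.log w₁ + w₁ = p + q * F₁ - (C + 1) := by
    have h := congrArg Real.log hw1
    rwa [Real.log_mul hw1pos.ne' (Real.exp_ne_zero _), Real.log_exp, Real.log_exp] at h
  have hl2 : Real.log w₂ + w₂ = p + q * F₂ - (C + 1) := by
    have h := congrArg Real.log hw2
    rwa [Real.log_mul hw2pos.ne' (Real.exp_ne_zero _), Real.log_exp, Real.log_exp] at h
  have hqF : q * F₁ ≤ q * F₂ := mul_le_mul_of_nonneg_left h12 hq0
  have hww : w₁ ≤ w₂ := by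
    by_contra h
    push_neg at h
    have hlog := Real.log_lt_log hw2pos h
    linarith
  have hqt : q * F₂ - q * F₁ ≤ F₂ - F₁ := by nlinarith
  have hlog2 : Real.log w₂ ≤ Real.log w₁ + (F₂ - F₁) := by linarith
  have hw2le : w₂ ≤ w₁ * Real.exp (F₂ - F₁) := by
    calc w₂ = Real.exp (Real.log w₂) := (Real.exp_log hw2pos).symm
      _ ≤ Real.exp (Real.log w₁ + (F₂ - F₁)) := Real.exp_le_exp.mpr hlog2
      _ = w₁ * Real.exp (F₂ - F₁) := by rw [Real.exp_add, Real.exp_log hw1pos]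
  have ht0 : (0:ℝ) ≤ F₂ - F₁ := by linarith
  have hsc : (1 - F₂) * Real.exp (F₂ - F₁) ≤ 1 - F₁ := by
    have ht := texp_aux (F₂ - F₁) ht0
    have he1 : 1 ≤ Real.exp (F₂ - F₁) := Real.one_le_exp ht0
    nlinarith [mul_nonneg h0 (by linarith : (0:ℝ) ≤ Real.exp (F₂ - F₁) - 1)]
  have h1 : (1 - F₂) * w₂ ≤ (1 - F₂) * (w₁ * Real.exp (F₂ - F₁)) :=
    mul_le_mul_of_nonneg_left hw2le (by linarith)
  nlinarith [mul_le_mul_of_nonneg_right hsc hw1pos.le]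

lemma R_pos (p q F π : ℝ) : 0 < R p q F π := by
  unfold R; positivity

lemma R_lt_one (p q F π : ℝ) : R p q F π < 1 := by
  unfold R
  rw [div_lt_one (by positivity)]
  linarith [Real.exp_pos (p + q * F - π)]

/-- In the two-period problem with `0 ≤ q ≤ 1`, any optimal first-period price
dominates the optimal last-period price: `π*_0(F) ≥ π*_1(F) = C+1+W(e^{p+qF-(C+1)})`. -/
theorem stmt_14 (C p q : ℝ) (hC : 0 ≤ C) (hq0 : 0 ≤ q) (hq1 : q ≤ 1)
    (W : ℝ → ℝ) (hW : ∀ z : ℝ, 0 ≤ z → 0 ≤ W z ∧ W z * Real.exp (W z) = z)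
    (F : ℝ) (hF : F ∈ Set.Ico (0:ℝ) 1) (π₀ : ℝ) (hπ₀ : 0 ≤ π₀)
    (hmax : IsMaxOn
      (fun π : ℝ => H C p q F π +
        (1 - Fplus p q F π) * W (Real.exp (p + q * Fplus p q F π - (C + 1))))
      (Set.Ici (0:ℝ)) π₀) :
    C + 1 + W (Real.exp (p + q * F - (C + 1))) ≤ π₀ := by
  obtain ⟨hF0, hF1⟩ := hF
  by_contra hcon
  push_neg at hcon
  obtain ⟨hw0, hwe⟩ := hW (Real.exp (p + q * F - (C + 1))) (Real.exp_pos _).le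
  set w := W (Real.exp (p + q * F - (C + 1))) with hwdef
  clear_value w
  have hwpos : 0 < w := by
    rcases hw0.lt_or_eq with h | h
    · exact h
    · exfalso
      have := Real.exp_pos (p + q * F - (C + 1))
      nlinarith [Real.exp_pos w]
  set πs := C + 1 + w with hπsdef
  clear_value πs
  -- exp(p+qF-πs) = w
  have hEs : Real.exp (p + q * F - πs) = w := by
    have h : p + q * F - πs = (p + q * F - (C + 1)) + (-w) := by rw [hπsdef]; ring
    rw [h, Real.exp_add, ← hwe, mul_assoc, ← Real.exp_add]
    simp
  have hRs : R p q F πs = w / (1 + w) := by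
    unfold R; rw [hEs]
  have h1w : (0:ℝ) < 1 + w := by linarith
  have hHs : H C p q F πs = (1 - F) * w := by
    unfold H
    rw [hRs, hπsdef]
    field_simp
    ring
  -- value comparison for H
  set E₀ := Real.exp (p + q * F - π₀) with hE₀def
  clear_value E₀
  have hE₀pos : 0 < E₀ := by rw [hE₀def]; exact Real.exp_pos _
  set s := π₀ - (C + 1) - w with hsdef
  clear_value s
  have hs : s < 0 := by
    have h := hcon
    rw [hπsdef] at h
    rw [hsdef]; linarith
  have hE₀ : E₀ = w * Real.exp (-s) := by
    have h : p + q * F - π₀ = (p + q * F - (C + 1)) + ((C + 1) - π₀) := by ring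
    rw [hE₀def, h, Real.exp_add, ← hwe, mul_assoc, ← Real.exp_add]
    congr 1
    rw [hsdef]; ring
  have hπ₀s : π₀ - C = s + 1 + w := by rw [hsdef]; ring
  have hlt : s + 1 < Real.exp s := Real.add_one_lt_exp hs.ne
  have hme : Real.exp s * Real.exp (-s) = 1 := by rw [← Real.exp_add]; simp
  have key : (π₀ - C) * E₀ < w * (1 + E₀) := by
    rw [hπ₀s, hE₀]
    nlinarith [mul_lt_mul_of_pos_right hlt (Real.exp_pos (-s)), Real.exp_pos (-s), hwpos]
  have h1E : (0:ℝ) < 1 + E₀ := by linarith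
  have hH : H C p q F π₀ < (1 - F) * w := by
    unfold H R
    rw [← hE₀def, ← mul_div_assoc, div_lt_iff₀ h1E]
    nlinarith [mul_lt_mul_of_pos_left key (show (0:ℝ) < 1 - F by linarith)]
  -- Fplus comparison
  have hR₀ : R p q F π₀ = E₀ / (1 + E₀) := by unfold R; rw [← hE₀def]
  have hwE : w < E₀ := by
    rw [hE₀]
    have : 1 < Real.exp (-s) := by
      have := Real.add_one_lt_exp (show (-s) ≠ 0 by linarith)
      linarith
    nlinarith
  have hRle : R p q F πs ≤ R p q F π₀ := by
    rw [hRs, hR₀, div_le_div_iff₀ h1w h1E]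
    nlinarith
  have hF1' : (0:ℝ) ≤ 1 - F := by linarith
  have hFp1 : 0 ≤ Fplus p q F πs := by
    unfold Fplus
    linarith [mul_nonneg hF1' (R_pos p q F πs).le]
  have hFp12 : Fplus p q F πs ≤ Fplus p q F π₀ := by
    unfold Fplus
    linarith [mul_le_mul_of_nonneg_left hRle hF1']
  have hFp2 : Fplus p q F π₀ ≤ 1 := by
    unfold Fplus
    linarith [mul_le_mul_of_nonneg_left (R_lt_one p q F π₀).le hF1']
  have hV := Vmono C p q hq0 hq1 W hW (Fplus p q F πs) (Fplus p q F π₀) hFp1 hFp12 hFp2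
  have hmem : πs ∈ Set.Ici (0:ℝ) := by
    simp only [Set.mem_Ici]; rw [hπsdef]; linarith
  have hle := hmax hmem
  simp only [Set.mem_setOf_eq] at hle
  rw [hHs] at hle
  linarith
end
end
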